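/- For every x ∈ ℂ and n ≥ 0, the decomposition H_n(x) = (e^{x²}/2) w^{(n)}(−x) + (e^{x²}/2) (−1)^n w^{(n)}(x) holds. -/

import Mathlib

open Complex

/-- The complementary error function, extended to `ℂ`:
`erfc z = (2/√π) ∫_0^∞ e^{-(z+t)²} dt`. -/
noncomputable def cerfc (z : ℂ) : ℂ :=
  (2 / (Real.sqrt Real.pi : ℂ)) * ∫ t in Set.Ioi (0 : ℝ), Complex.exp (-(z + (t : ℂ)) ^ 2)

/-- The Faddeeva (error) function `w(z) = e^{-z²} erfc(-iz)`. -/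
noncomputable def faddeeva (z : ℂ) : ℂ := Complex.exp (-z ^ 2) * cerfc (-I * z)

section Aux

open MeasureTheory Set Metric Polynomial

lemma integrable_shift (z : ℂ) : Integrable (fun t : ℝ => Complex.exp (-(z + (t:ℂ)) ^ 2)) := by
  have h := integrable_cexp_quadratic (b := 1) (by norm_num) (-2*z) (-z^2)
  convert h using 2 with t
  congr 1
  ring

lemma integral_shift (z : ℂ) :
    (∫ t : ℝ, Complex.exp (-(z + (t:ℂ)) ^ 2)) = (Real.sqrt Real.pi : ℂ) := by
  have h := integral_cexp_quadratic (b := -1) (by norm_num) (-2*z) (-z^2)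
  have e : (∫ t : ℝ, Complex.exp (-(z + (t:ℂ)) ^ 2))
      = ∫ t : ℝ, Complex.exp (-1 * (t:ℂ)^2 + (-2*z) * t + (-z^2)) := by
    congr 1; funext t; congr 1; ring
  rw [e, h]
  rw [show -z^2 - (-2*z)^2 / (4 * (-1:ℂ)) = 0 by ring]
  rw [Complex.exp_zero, mul_one, neg_neg, div_one]
  rw [show ((1:ℂ)/2) = ((1/2:ℝ):ℂ) by norm_num, ← Complex.ofReal_cpow Real.pi_pos.le,
    Real.sqrt_eq_rpow]

lemma cerfc_add_neg (z : ℂ) : cerfc z + cerfc (-z) = 2 := by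
  have h1 : (∫ t in Set.Ioi (0:ℝ), Complex.exp (-(-z + (t:ℂ)) ^ 2))
      = ∫ t in Set.Iic (0:ℝ), Complex.exp (-(z + (t:ℂ)) ^ 2) := by
    rw [show (∫ t in Set.Ioi (0:ℝ), Complex.exp (-(-z + (t:ℂ)) ^ 2))
        = ∫ t in Set.Ioi (0:ℝ), Complex.exp (-(z + ((-t : ℝ):ℂ)) ^ 2) from by
      congr 1; funext t; push_cast; congr 1; ring]
    have h := integral_comp_neg_Ioi (0:ℝ) (fun t : ℝ => Complex.exp (-(z + (t:ℂ)) ^ 2))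
    simpa using h
  have h2 : (∫ t in Set.Iic (0:ℝ), Complex.exp (-(z + (t:ℂ)) ^ 2))
      + (∫ t in Set.Ioi (0:ℝ), Complex.exp (-(z + (t:ℂ)) ^ 2))
      = ∫ t : ℝ, Complex.exp (-(z + (t:ℂ)) ^ 2) :=
    intervalIntegral.integral_Iic_add_Ioi (integrable_shift z).integrableOn
      (integrable_shift z).integrableOn
  have hs : (Real.sqrt Real.pi : ℂ) ≠ 0 := by
    simpa using (Real.sqrt_pos.mpr Real.pi_pos).ne'
  unfold cerfc
  rw [← mul_add, h1, add_comm, h2, integral_shift]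
  field_simp

lemma faddeeva_add_neg (z : ℂ) :
    faddeeva z + faddeeva (-z) = 2 * Complex.exp (-z ^ 2) := by
  unfold faddeeva
  rw [neg_sq, show -I * -z = -(-I * z) by ring, ← mul_add, cerfc_add_neg, mul_comm]

/-- Auxiliary entire function `G z = ∫_0^∞ e^{-t² - 2zt} dt`. -/
noncomputable def G (z : ℂ) : ℂ := ∫ t in Set.Ioi (0:ℝ), Complex.exp (-(t:ℂ)^2 - 2*z*t)

lemma bound_integrable (c : ℝ) :
    Integrable (fun t : ℝ => 2 * Real.exp (-t^2 + c*t)) := by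
  have h := (integrable_cexp_quadratic (b := 1) (by norm_num) (c : ℂ) 0).norm
  have e : (fun t : ℝ => ‖Complex.exp (-1 * (t:ℂ)^2 + (c:ℂ)*t + 0)‖)
      = fun t : ℝ => Real.exp (-t^2 + c*t) := by
    funext t
    rw [show (-1 * (t:ℂ)^2 + (c:ℂ)*t + 0) = ((-t^2 + c*t : ℝ) : ℂ) by push_cast; ring,
      Complex.norm_exp, Complex.ofReal_re]
  rw [e] at h
  exact h.const_mul 2

lemma G_differentiable : Differentiable ℂ G := by
  intro z₀
  set M : ℝ := ‖z₀‖ + 1 with hM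
  have hM0 : 0 < M := by have := norm_nonneg z₀; linarith
  set bound : ℝ → ℝ := fun t => 2 * Real.exp (-t^2 + (2*M+1)*t) with hbound
  have hcont : ∀ z : ℂ, Continuous (fun t : ℝ => Complex.exp (-(t:ℂ)^2 - 2*z*t)) := by
    intro z
    fun_prop
  have hcont' : Continuous (fun t : ℝ => Complex.exp (-(t:ℂ)^2 - 2*z₀*t) * (-(2*(t:ℂ)))) := by
    fun_prop
  have key := hasDerivAt_integral_of_dominated_loc_of_deriv_le
    (F := fun (z : ℂ) (t : ℝ) => Complex.exp (-(t:ℂ)^2 - 2*z*t))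
    (F' := fun (z : ℂ) (t : ℝ) => Complex.exp (-(t:ℂ)^2 - 2*z*t) * (-(2*(t:ℂ))))
    (x₀ := z₀) (μ := volume.restrict (Set.Ioi (0:ℝ)))
    (bound := bound) (Metric.ball_mem_nhds z₀ one_pos)
    (Filter.Eventually.of_forall fun z => ((hcont z).aestronglyMeasurable).restrict)
    ?_ (hcont'.aestronglyMeasurable.restrict) ?_ ?_ ?_
  · exact key.2.differentiableAt
  · have h := integrable_cexp_quadratic (b := 1) (by norm_num) (-2*z₀) 0
    have h' : Integrable (fun t : ℝ => Complex.exp (-(t:ℂ)^2 - 2*z₀*t)) := by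
      convert h using 2 with t
      congr 1
      ring
    exact h'.restrict
  · refine (ae_restrict_iff' measurableSet_Ioi).mpr (Filter.Eventually.of_forall fun t ht => ?_)
    intro z hz
    have htpos : (0:ℝ) < t := ht
    have hre : |z.re| ≤ M := by
      have h1 : ‖z - z₀‖ < 1 := by simpa [dist_eq_norm] using hz
      have h2 : ‖z‖ ≤ ‖z₀‖ + 1 := by
        have := norm_sub_norm_le z z₀
        linarith
      exact le_trans (Complex.abs_re_le_norm z) h2
    rw [norm_mul]
    have hne : ‖Complex.exp (-(t:ℂ)^2 - 2*z*t)‖ = Real.exp (-t^2 - 2*z.re*t) := by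
      rw [Complex.norm_exp]
      congr 1
      simp [Complex.sub_re, Complex.mul_re, ← Complex.ofReal_pow]
    rw [hne]
    have h2 : ‖(-(2*(t:ℂ)))‖ = 2*t := by
      rw [norm_neg]
      simp [abs_of_pos htpos]
    rw [h2]
    calc Real.exp (-t^2 - 2*z.re*t) * (2*t)
        ≤ Real.exp (-t^2 + 2*M*t) * (2*t) := by
          have hle : Real.exp (-t^2 - 2*z.re*t) ≤ Real.exp (-t^2 + 2*M*t) := by
            apply Real.exp_le_exp.mpr
            have h3 : -z.re ≤ M := by
              rcases abs_le.mp hre with ⟨h4, _⟩; linarith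
            nlinarith
          nlinarith [Real.exp_pos (-t^2 - 2*z.re*t)]
      _ ≤ Real.exp (-t^2 + 2*M*t) * (2 * Real.exp t) := by
          have : t ≤ Real.exp t := (Real.add_one_le_exp t).trans' (by linarith)
          nlinarith [Real.exp_pos (-t^2 + 2*M*t), Real.exp_pos t]
      _ = bound t := by
          show Real.exp (-t^2+2*M*t) * (2*Real.exp t) = 2 * Real.exp (-t^2+(2*M+1)*t)
          rw [show Real.exp (-t^2+2*M*t) * (2*Real.exp t)
              = 2*(Real.exp (-t^2+2*M*t) * Real.exp t) from by ring, ← Real.exp_add]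
          ring_nf
  · exact (bound_integrable (2*M+1)).restrict
  · refine Filter.Eventually.of_forall fun t => fun z hz => ?_
    have h1 : HasDerivAt (fun z : ℂ => -(t:ℂ)^2 - 2*z*t) (-(2*(t:ℂ))) z := by
      have := ((hasDerivAt_id z).const_mul (2:ℂ)).mul_const (t:ℂ)
      simpa [sub_eq_add_neg] using (this.neg).const_add (-(t:ℂ)^2)
    simpa using h1.cexp

lemma faddeeva_eq_G (z : ℂ) : faddeeva z = (2 / (Real.sqrt Real.pi : ℂ)) * G (-I * z) := by
  unfold faddeeva cerfc G
  have h1 : (∫ t in Set.Ioi (0:ℝ), Complex.exp (-(-I*z + (t:ℂ)) ^ 2))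
      = Complex.exp (-(-I*z)^2) * ∫ t in Set.Ioi (0:ℝ), Complex.exp (-(t:ℂ)^2 - 2*(-I*z)*t) := by
    rw [← integral_const_mul]
    congr 1; funext t
    rw [← Complex.exp_add]
    congr 1; ring
  rw [h1, show -(-I*z)^2 = z^2 by linear_combination (-z^2) * I_sq]
  have e : Complex.exp (-z^2) * Complex.exp (z^2) = 1 := by
    rw [← Complex.exp_add]; simp
  linear_combination ((2 / (Real.sqrt Real.pi : ℂ))
      * ∫ t in Set.Ioi (0:ℝ), Complex.exp (-(t:ℂ)^2 - 2*(-I*z)*t)) * e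

lemma faddeeva_differentiable : Differentiable ℂ faddeeva := by
  have : faddeeva = fun z => (2 / (Real.sqrt Real.pi : ℂ)) * G (-I * z) :=
    funext faddeeva_eq_G
  rw [this]
  apply Differentiable.const_mul
  exact G_differentiable.comp (differentiable_id.const_mul _)

/-- Concrete physicists' Hermite polynomials over `ℂ`. -/
noncomputable def hp : ℕ → Polynomial ℂ
  | 0 => 1
  | 1 => Polynomial.C 2 * Polynomial.X
  | (n+2) => Polynomial.C 2 * Polynomial.X * hp (n+1) - Polynomial.C (2*(n+1) : ℂ) * hp n

lemma hp_rec (n : ℕ) : hp (n+1)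
    = Polynomial.C 2 * Polynomial.X * hp n - Polynomial.C (2*n : ℂ) * hp (n-1) := by
  cases n with
  | zero => simp [hp]
  | succ m => simp only [hp]; push_cast; ring_nf

lemma hp_deriv : ∀ n : ℕ, (hp n).derivative = Polynomial.C (2*n : ℂ) * hp (n-1)
  | 0 => by simp [hp]
  | 1 => by simp [hp]
  | (n+2) => by
    have h1 := hp_deriv (n+1)
    have h0 := hp_deriv n
    show derivative (hp (n+2)) = Polynomial.C (2*((n+2 : ℕ):ℂ)) * hp (n+1)
    simp only [hp, derivative_sub, derivative_mul, derivative_C, derivative_X, h1, h0,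
      show n+1-1 = n from rfl]
    rw [hp_rec n]
    push_cast
    simp only [map_add, map_mul, map_ofNat, map_one]
    ring

lemma rodrigues (n : ℕ) : ∀ x : ℂ,
    iteratedDeriv n (fun z : ℂ => Complex.exp (-z^2)) x
      = (-1)^n * (hp n).eval x * Complex.exp (-x^2) := by
  induction n with
  | zero => intro x; simp [hp]
  | succ n ih =>
    intro x
    rw [iteratedDeriv_succ]
    have hfun : iteratedDeriv n (fun z : ℂ => Complex.exp (-z^2))
        = fun y => (-1:ℂ)^n * ((hp n).eval y * Complex.exp (-y^2)) := by
      funext y; rw [ih y]; ring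
    rw [hfun]
    have he : HasDerivAt (fun y : ℂ => Complex.exp (-y^2))
        (Complex.exp (-x^2) * (-(2*x))) x := by
      have h1 : HasDerivAt (fun y : ℂ => -y^2) (-(2*x)) x := by
        simpa using (hasDerivAt_pow 2 x).fun_neg
      simpa using h1.cexp
    have hpx : HasDerivAt (fun y : ℂ => (hp n).eval y) ((hp n).derivative.eval x) x :=
      (hp n).hasDerivAt x
    have hd := ((hpx.fun_mul he).const_mul ((-1:ℂ)^n))
    rw [hd.deriv]
    rw [hp_deriv n, hp_rec n]
    simp only [eval_sub, eval_mul, eval_C, eval_X]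
    ring

end Aux

/-- Decomposition of the Hermite polynomials in terms of derivatives of the error
function: `H_n(x) = (e^{x²}/2) w⁽ⁿ⁾(-x) + (e^{x²}/2) (-1)ⁿ w⁽ⁿ⁾(x)`. -/
theorem hermite_eq_faddeeva_decomposition (H : ℕ → ℂ → ℂ)
    (hH0 : ∀ x, H 0 x = 1) (hH1 : ∀ x, H 1 x = 2 * x)
    (hHrec : ∀ n : ℕ, 1 ≤ n → ∀ x, H (n + 1) x = 2 * x * H n x - 2 * (n : ℂ) * H (n - 1) x)
    (x : ℂ) (n : ℕ) :
    H n x = Complex.exp (x ^ 2) / 2 * iteratedDeriv n faddeeva (-x)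
      + Complex.exp (x ^ 2) / 2 * (-1) ^ n * iteratedDeriv n faddeeva x := by
  -- `H` agrees with the concrete Hermite polynomials
  have hH : ∀ m : ℕ, ∀ y : ℂ, H m y = (hp m).eval y := by
    have key : ∀ m : ℕ, (∀ y : ℂ, H m y = (hp m).eval y)
        ∧ (∀ y : ℂ, H (m+1) y = (hp (m+1)).eval y) := by
      intro m
      induction m with
      | zero =>
        refine ⟨fun y => by simp [hp, hH0], fun y => by simp [hp, hH1 y]⟩
      | succ m ih =>
        refine ⟨ih.2, fun y => ?_⟩
        have hr := hHrec (m+1) (Nat.le_add_left 1 m) y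
        rw [show m+1-1 = m from rfl] at hr
        rw [hr, ih.1, ih.2, hp_rec (m+1), show m+1-1 = m from rfl]
        simp only [Polynomial.eval_sub, Polynomial.eval_mul, Polynomial.eval_C, Polynomial.eval_X]
    exact fun m => (key m).1
  -- smoothness
  have hsm : ContDiff ℂ n faddeeva := faddeeva_differentiable.contDiff
  have hsmn : ContDiff ℂ n (fun z : ℂ => faddeeva (-z)) :=
    hsm.comp (contDiff_neg)
  -- key identity
  have hadd : iteratedDeriv n (fun z : ℂ => faddeeva z + faddeeva (-z)) x
      = iteratedDeriv n faddeeva x + iteratedDeriv n (fun z : ℂ => faddeeva (-z)) x := by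
    have h := iteratedDerivWithin_add (Set.mem_univ x) uniqueDiffOn_univ
      (f := faddeeva) (g := fun z : ℂ => faddeeva (-z))
      hsm.contDiffWithinAt hsmn.contDiffWithinAt
    simpa [iteratedDerivWithin_univ, Pi.add_def] using h
  have hg : iteratedDeriv n (fun z : ℂ => faddeeva z + faddeeva (-z)) x
      = 2 * ((-1)^n * (hp n).eval x * Complex.exp (-x^2)) := by
    have hfun : (fun z : ℂ => faddeeva z + faddeeva (-z))
        = fun z : ℂ => 2 * Complex.exp (-z^2) := funext faddeeva_add_neg
    rw [hfun]
    have hgauss : ContDiffOn ℂ n (fun z : ℂ => Complex.exp (-z^2)) Set.univ := by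
      exact (((differentiable_pow 2 (𝕜 := ℂ)).neg).cexp).contDiff.contDiffOn
    have h := iteratedDerivWithin_const_mul (Set.mem_univ x) uniqueDiffOn_univ (2:ℂ)
      (f := fun z : ℂ => Complex.exp (-z^2)) (hgauss.contDiffWithinAt (Set.mem_univ x))
    have h2 : iteratedDeriv n (fun z : ℂ => 2 * Complex.exp (-z^2)) x
        = 2 * iteratedDeriv n (fun z : ℂ => Complex.exp (-z^2)) x := by
      simpa [iteratedDerivWithin_univ] using h
    rw [h2, rodrigues n x]
  have hneg : iteratedDeriv n (fun z : ℂ => faddeeva (-z)) x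
      = (-1:ℂ)^n * iteratedDeriv n faddeeva (-x) := by
    rw [iteratedDeriv_comp_neg]
    simp [smul_eq_mul]
  have hkey : iteratedDeriv n faddeeva x + (-1:ℂ)^n * iteratedDeriv n faddeeva (-x)
      = 2 * ((-1)^n * (hp n).eval x * Complex.exp (-x^2)) := by
    rw [← hneg, ← hadd, hg]
  -- finish
  have e1 : Complex.exp (x^2) * Complex.exp (-x^2) = 1 := by
    rw [← Complex.exp_add]; simp
  have e2 : (-1:ℂ)^n * (-1:ℂ)^n = 1 := by
    rw [← pow_add, ← two_mul, pow_mul]; norm_num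
  have hmain : (hp n).eval x = Complex.exp (x ^ 2) / 2 * iteratedDeriv n faddeeva (-x)
      + Complex.exp (x ^ 2) / 2 * (-1) ^ n * iteratedDeriv n faddeeva x := by
    have h := hkey
    calc (hp n).eval x
        = Complex.exp (x^2)/2 * (-1:ℂ)^n
            * (iteratedDeriv n faddeeva x + (-1:ℂ)^n * iteratedDeriv n faddeeva (-x)) := by
          rw [h]
          linear_combination (-(Complex.exp (x^2) * Complex.exp (-x^2) * (hp n).eval x)) * e2
            - ((hp n).eval x) * e1
      _ = Complex.exp (x ^ 2) / 2 * iteratedDeriv n faddeeva (-x)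
          + Complex.exp (x ^ 2) / 2 * (-1) ^ n * iteratedDeriv n faddeeva x := by
          linear_combination (Complex.exp (x^2)/2 * iteratedDeriv n faddeeva (-x)) * e2
  rw [hH n x, hmain]
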